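/- Let (G, G̃) and (H, H̃) be pairs of finite abelian p-groups satisfying condition (**), and let f ≥ 0, F ≥ 0 be integers with f − F even. Then G^f ⊕ G̃^{F+1} ⊕ (G ⊗ G̃)² ≅ H^f ⊕ H̃^{F+1} ⊕ (H ⊗ H̃)² if and only if (G, G̃) = (H, H̃). -/

import Mathlib

open TensorProduct Pointwise

namespace Stmt12Aux



/-! ### torsion counting -/

noncomputable def tc (n : ℕ) (A : Type*) [AddCommGroup A] : ℕ :=
  Nat.card {x : A // n • x = 0}

lemma tc_congr {A B : Type*} [AddCommGroup A] [AddCommGroup B] (n : ℕ) (φ : A ≃+ B) :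
    tc n A = tc n B := by
  refine Nat.card_congr (Equiv.subtypeEquiv φ.toEquiv fun x => ?_)
  rw [show (φ.toEquiv x = φ x) from rfl, ← map_nsmul]
  exact (AddEquiv.map_eq_zero_iff φ).symm

lemma tc_pi {ι : Type*} [Fintype ι] (n : ℕ) (A : ι → Type*) [∀ i, AddCommGroup (A i)] :
    tc n (∀ i, A i) = ∏ i, tc n (A i) := by
  simp only [tc, ← Nat.card_pi]
  refine Nat.card_congr ?_
  refine ⟨fun x i => ⟨x.1 i, ?_⟩, fun y => ⟨fun i => (y i).1, ?_⟩, fun x => rfl, fun y => rfl⟩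
  · exact congrFun x.2 i
  · funext i; exact (y i).2

lemma tc_const_pi {ι : Type*} [Fintype ι] (n : ℕ) (A : Type*) [AddCommGroup A] :
    tc n (ι → A) = tc n A ^ Fintype.card ι := by
  rw [tc_pi, Finset.prod_const, Finset.card_univ]

lemma tc_prod (n : ℕ) (A B : Type*) [AddCommGroup A] [AddCommGroup B] :
    tc n (A × B) = tc n A * tc n B := by
  simp only [tc, ← Nat.card_prod]
  refine Nat.card_congr ?_
  refine ⟨fun x => (⟨x.1.1, ?_⟩, ⟨x.1.2, ?_⟩), fun y => ⟨(y.1.1, y.2.1), ?_⟩,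
    fun x => rfl, fun y => rfl⟩
  · exact congrArg Prod.fst x.2
  · exact congrArg Prod.snd x.2
  · exact Prod.ext y.1.2 y.2.2

lemma nsmul_zmod_eq_zero_iff (a b : ℕ) [NeZero b] (x : ZMod b) :
    a • x = 0 ↔ b ∣ a * x.val := by
  conv_lhs => rw [← ZMod.natCast_zmod_val x]
  rw [nsmul_eq_mul, ← Nat.cast_mul, ZMod.natCast_eq_zero_iff]

lemma tc_zmod {p : ℕ} (hp : p.Prime) (t n : ℕ) :
    tc (p ^ t) (ZMod (p ^ n)) = p ^ min n t := by
  have hppos : 0 < p := hp.pos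
  have hpn : NeZero (p ^ n) := ⟨(pow_pos hppos n).ne'⟩
  rw [tc]
  rcases le_total n t with h | h
  · rw [min_eq_left h]
    have : ∀ x : ZMod (p ^ n), p ^ t • x = 0 := by
      intro x
      rw [nsmul_zmod_eq_zero_iff]
      exact Dvd.dvd.mul_right (pow_dvd_pow p h) _
    rw [Nat.card_congr (Equiv.subtypeUnivEquiv this), Nat.card_zmod]
  · rw [min_eq_right h]
    have hdpos : 0 < p ^ (n - t) := pow_pos hppos _
    have hsplit : p ^ n = p ^ t * p ^ (n - t) := by
      rw [← pow_add, Nat.add_sub_cancel' h]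
    have key : ∀ x : ZMod (p ^ n), (p ^ t • x = 0) ↔ p ^ (n - t) ∣ x.val := by
      intro x
      rw [nsmul_zmod_eq_zero_iff]
      obtain ⟨v, hv⟩ : ∃ v, x.val = v := ⟨_, rfl⟩
      rw [hv, hsplit]
      exact mul_dvd_mul_iff_left (pow_pos hppos t).ne'
    have hb : ∀ j : ℕ, j < p ^ t → j * p ^ (n - t) < p ^ n := by
      intro j hj
      rw [hsplit]
      exact Nat.mul_lt_mul_of_lt_of_le hj le_rfl hdpos
    refine Nat.card_eq_of_equiv_fin ?_
    refine ⟨fun x => ⟨x.1.val / p ^ (n - t), ?_⟩,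
      fun j => ⟨((j.val * p ^ (n - t) : ℕ) : ZMod (p ^ n)), ?_⟩, ?_, ?_⟩
    · rw [Nat.div_lt_iff_lt_mul hdpos]
      calc x.1.val < p ^ n := ZMod.val_lt x.1
        _ = p ^ t * p ^ (n - t) := hsplit
    · rw [key, ZMod.val_natCast_of_lt (hb j.val j.isLt)]
      exact Dvd.dvd.mul_left dvd_rfl j.val
    · rintro ⟨x, hx⟩
      rw [key] at hx
      apply Subtype.ext
      simp only
      rw [Nat.div_mul_cancel hx, ZMod.natCast_zmod_val]
    · rintro ⟨j, hj⟩
      apply Fin.ext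
      simp only
      rw [ZMod.val_natCast_of_lt (hb j hj), Nat.mul_div_cancel _ hdpos]

/-! ### profiles -/

variable {ι κ : Type} [Fintype ι] [Fintype κ]

def muf (e : ι → ℕ) (t : ℕ) : ℕ := ∑ i, min (e i) t

def nuf (e : ι → ℕ) (t : ℕ) : ℕ := Finset.card (Finset.univ.filter fun i => t ≤ e i)

def mutf (g : κ → ℕ) (e : ι → ℕ) (t : ℕ) : ℕ := ∑ j, ∑ i, min (min (g j) (e i)) t

lemma muf_succ (e : ι → ℕ) (t : ℕ) : muf e (t + 1) = muf e t + nuf e (t + 1) := by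
  classical
  have h : ∀ i, min (e i) (t + 1) = min (e i) t + (if t + 1 ≤ e i then 1 else 0) := by
    intro i; split_ifs <;> omega
  rw [muf, Finset.sum_congr rfl (fun i _ => h i), Finset.sum_add_distrib, nuf,
    Finset.card_filter]
  rfl

lemma mutf_succ (g : κ → ℕ) (e : ι → ℕ) (t : ℕ) :
    mutf g e (t + 1) = mutf g e t + nuf g (t + 1) * nuf e (t + 1) := by
  classical
  have h : ∀ j i, min (min (g j) (e i)) (t + 1) = min (min (g j) (e i)) t +
      (if t + 1 ≤ g j then 1 else 0) * (if t + 1 ≤ e i then 1 else 0) := by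
    intro j i; split_ifs <;> omega
  rw [mutf]
  rw [Finset.sum_congr rfl (fun j _ => Finset.sum_congr rfl (fun i _ => h j i))]
  have key : ∀ j : κ, (∑ i, (min (min (g j) (e i)) t +
      (if t + 1 ≤ g j then 1 else 0) * (if t + 1 ≤ e i then 1 else 0))) =
      (∑ i, min (min (g j) (e i)) t) +
        (if t + 1 ≤ g j then 1 else 0) * ∑ i, (if t + 1 ≤ e i then 1 else 0) := by
    intro j; rw [Finset.sum_add_distrib, Finset.mul_sum]
  rw [Finset.sum_congr rfl (fun j _ => key j), Finset.sum_add_distrib, ← Finset.sum_mul,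
    mutf, nuf, nuf, Finset.card_filter, Finset.card_filter]

lemma tc_pi_zmod {p : ℕ} (hp : p.Prime) (e : ι → ℕ) (t : ℕ) :
    tc (p ^ t) (∀ i, ZMod (p ^ e i)) = p ^ muf e t := by
  rw [tc_pi, Finset.prod_congr rfl (fun i _ => tc_zmod hp t (e i)), muf,
    Finset.prod_pow_eq_pow_sum]

lemma tc_pi_pi_zmod {p : ℕ} (hp : p.Prime) (g : κ → ℕ) (e : ι → ℕ) (t : ℕ) :
    tc (p ^ t) (∀ j : κ, ∀ i : ι, ZMod (p ^ min (g j) (e i))) = p ^ mutf g e t := by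
  rw [tc_pi, Finset.prod_congr rfl (fun j _ => tc_pi_zmod hp (fun i => min (g j) (e i)) t),
    Finset.prod_pow_eq_pow_sum, mutf]
  rfl




lemma intCast_pow_smul_zmod {p a b : ℕ} (y : ZMod (p ^ b)) (h : b ≤ a) :
    ((p : ℤ) ^ a) • y = 0 := by
  rw [← Nat.cast_pow, natCast_zsmul,
    show p ^ a = p ^ (a - b) * p ^ b by rw [← pow_add, Nat.sub_add_cancel h], mul_nsmul]
  simp [nsmul_eq_mul, ZMod.natCast_self]

lemma zmod_pow_tensor (p a b : ℕ) (hp : 0 < p) :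
    Nonempty ((ZMod (p ^ a)) ⊗[ℤ] (ZMod (p ^ b)) ≃+ ZMod (p ^ (min a b))) := by
  haveI : NeZero (p ^ a) := ⟨(pow_pos hp a).ne'⟩
  haveI : NeZero (p ^ b) := ⟨(pow_pos hp b).ne'⟩
  have e1 := TensorProduct.congr
    ((Int.quotientSpanNatEquivZMod (p ^ a)).toAddEquiv.toIntLinearEquiv)
    (LinearEquiv.refl ℤ (ZMod (p ^ b)))
  have e2 := quotTensorEquivQuotSMul (ZMod (p ^ b)) (Ideal.span {((p ^ a : ℕ) : ℤ)})
  have hspan := Submodule.ideal_span_singleton_smul ((p ^ a : ℕ) : ℤ)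
    (⊤ : Submodule ℤ (ZMod (p ^ b)))
  rcases le_total b a with h | h
  · -- min a b = b, p^a kills everything, submodule is ⊥
    have hbot : (((p ^ a : ℕ) : ℤ) • (⊤ : Submodule ℤ (ZMod (p ^ b)))) = ⊥ := by
      rw [eq_bot_iff]
      rintro x hx
      obtain ⟨y, -, rfl⟩ := Submodule.mem_map.mp hx
      have hy : (DistribSMul.toLinearMap ℤ (ZMod (p ^ b)) (((p ^ a : ℕ)) : ℤ)) y
          = ((p : ℤ) ^ a) • y := by push_cast [DistribSMul.toLinearMap_apply]; rfl
      rw [hy, intCast_pow_smul_zmod y h]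
      exact Submodule.zero_mem ⊥
    have e3 := Submodule.quotEquivOfEq _ _ (hspan.trans hbot)
    have e4 := Submodule.quotEquivOfEqBot (⊥ : Submodule ℤ (ZMod (p ^ b))) rfl
    have e5 : ZMod (p ^ b) ≃+ ZMod (p ^ (min a b)) :=
      (ZMod.ringEquivCongr (congrArg (p ^ ·) (min_eq_right h).symm)).toAddEquiv
    exact ⟨e1.symm.toAddEquiv.trans <| e2.toAddEquiv.trans <| e3.toAddEquiv.trans <|
      e4.toAddEquiv.trans e5⟩
  · -- a ≤ b : quotient is ZMod (p^a)
    have hdvd : p ^ a ∣ p ^ b := pow_dvd_pow p h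
    set c : ZMod (p ^ b) →ₗ[ℤ] ZMod (p ^ a) :=
      (ZMod.castHom hdvd (ZMod (p ^ a))).toAddMonoidHom.toIntLinearMap with hc
    have hcx : ∀ x : ZMod (p ^ b), c x = ((x.val : ℕ) : ZMod (p ^ a)) := by
      intro x
      rw [hc]
      show (ZMod.castHom hdvd (ZMod (p ^ a))) x = _
      rw [ZMod.castHom_apply, ZMod.natCast_val]
  
    have hsurj : Function.Surjective c := by
      intro y
      refine ⟨((y.val : ℕ) : ZMod (p ^ b)), ?_⟩
      rw [hc]
      show (ZMod.castHom hdvd (ZMod (p ^ a))) _ = y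
      rw [map_natCast, ZMod.natCast_zmod_val]
    have hker : (((p ^ a : ℕ) : ℤ) • (⊤ : Submodule ℤ (ZMod (p ^ b)))) = LinearMap.ker c := by
      ext x
      rw [LinearMap.mem_ker, hcx x, ZMod.natCast_eq_zero_iff]
      constructor
      · rintro hx
        obtain ⟨y, -, rfl⟩ := Submodule.mem_map.mp hx
        have hy : (DistribSMul.toLinearMap ℤ (ZMod (p ^ b)) (((p ^ a : ℕ)) : ℤ)) y
            = (p ^ a : ℕ) • y := by
          show ((p ^ a : ℕ) : ℤ) • y = _
          rw [natCast_zsmul]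
        rw [hy]
        have h1 : (p ^ a) • y = ((p ^ a * y.val : ℕ) : ZMod (p ^ b)) := by
          conv_lhs => rw [← ZMod.natCast_zmod_val y]
          rw [nsmul_eq_mul, Nat.cast_mul]
        rw [h1, ZMod.val_natCast]
        exact (Nat.dvd_mod_iff hdvd).mpr ⟨y.val, rfl⟩
      · rintro ⟨v, hv⟩
        refine Submodule.mem_map.mpr ⟨((v : ℕ) : ZMod (p ^ b)), Submodule.mem_top, ?_⟩
        show ((p ^ a : ℕ) : ℤ) • ((v : ℕ) : ZMod (p ^ b)) = x
        rw [natCast_zsmul, nsmul_eq_mul, ← Nat.cast_mul, ← hv, ZMod.natCast_zmod_val]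
    have e3 := Submodule.quotEquivOfEq _ _ (hspan.trans hker)
    have e4 := LinearMap.quotKerEquivOfSurjective c hsurj
    have e5 : ZMod (p ^ a) ≃+ ZMod (p ^ (min a b)) :=
      (ZMod.ringEquivCongr (congrArg (p ^ ·) (min_eq_left h).symm)).toAddEquiv
    exact ⟨e1.symm.toAddEquiv.trans <| e2.toAddEquiv.trans <| e3.toAddEquiv.trans <|
      e4.toAddEquiv.trans e5⟩


lemma tensor_pi_zmod (p : ℕ) (hp : 0 < p) {ι κ : Type} [Fintype ι] [Fintype κ]
    (e : ι → ℕ) (g : κ → ℕ) :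
    Nonempty ((∀ i, ZMod (p ^ e i)) ⊗[ℤ] (∀ j, ZMod (p ^ g j)) ≃+
      ∀ j, ∀ i, ZMod (p ^ (min (g j) (e i)))) := by
  classical
  have T : ∀ (j : κ) (i : ι),
      Nonempty ((ZMod (p ^ g j)) ⊗[ℤ] (ZMod (p ^ e i)) ≃+ ZMod (p ^ min (g j) (e i))) :=
    fun j i => zmod_pow_tensor p (g j) (e i) hp
  refine ⟨?_⟩
  refine AddEquiv.trans
    (TensorProduct.piRight ℤ ℤ (∀ i, ZMod (p ^ e i)) (fun j => ZMod (p ^ g j))).toAddEquiv ?_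
  refine AddEquiv.piCongrRight (fun j => ?_)
  refine AddEquiv.trans (TensorProduct.comm ℤ _ _).toAddEquiv ?_
  refine AddEquiv.trans
    (TensorProduct.piRight ℤ ℤ (ZMod (p ^ g j)) (fun i => ZMod (p ^ e i))).toAddEquiv ?_
  exact AddEquiv.piCongrRight (fun i => (T j i).some)




lemma key_arith (f F x y ε δ : ℕ) (hε : ε ≤ 1) (hδ : δ ≤ 1)
    (h : f * x + (F + 1) * (x + ε) + 2 * (x * (x + ε))
       = f * y + (F + 1) * (y + δ) + 2 * (y * (y + δ))) :
    x = y ∧ ε = δ := by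
  have main : ∀ a b : ℕ, ¬ (f * a + (F + 1) * (a + 0) + 2 * (a * (a + 0))
      = f * b + (F + 1) * (b + 1) + 2 * (b * (b + 1))) := by
    intro a b hab
    rcases eq_or_lt_of_le (Nat.zero_le 0) with _ | _
    all_goals {
      rcases Nat.lt_or_ge b a with hba | hba
      · have hba' : b + 1 ≤ a := hba
        have h1 : (b+1)*(b+1) ≤ a*a := Nat.mul_le_mul hba' hba'
        have h2 : f*(b+1) ≤ f*a := Nat.mul_le_mul_left f hba'
        have h3 : (F+1)*(b+1) ≤ (F+1)*a := Nat.mul_le_mul_left _ hba'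
        nlinarith
      · have h1 : a*a ≤ b*b := Nat.mul_le_mul hba hba
        have h2 : f*a ≤ f*b := Nat.mul_le_mul_left f hba
        have h3 : (F+1)*a ≤ (F+1)*b := Nat.mul_le_mul_left _ hba
        nlinarith }
  interval_cases ε <;> interval_cases δ
  · exact ⟨by nlinarith, rfl⟩
  · exact absurd h (main x y)
  · exact absurd h.symm (main y x)
  · refine ⟨?_, rfl⟩
    nlinarith


lemma nuf_sum (e : ι ⊕ κ → ℕ) (t : ℕ) :
    nuf e t = nuf (fun i => e (Sum.inl i)) t + nuf (fun j => e (Sum.inr j)) t := by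
  classical
  rw [nuf, nuf, nuf, ← Fintype.card_subtype, ← Fintype.card_subtype, ← Fintype.card_subtype,
    ← Fintype.card_sum]
  refine Fintype.card_congr ⟨fun x => ?_, fun y => ?_, ?_, ?_⟩
  · rcases x with ⟨(i | j), hx⟩
    · exact Sum.inl ⟨i, hx⟩
    · exact Sum.inr ⟨j, hx⟩
  · rcases y with ⟨i, hi⟩ | ⟨j, hj⟩
    · exact ⟨Sum.inl i, hi⟩
    · exact ⟨Sum.inr j, hj⟩
  · rintro ⟨(i | j), hx⟩ <;> rfl
  · rintro (⟨i, hi⟩ | ⟨j, hj⟩) <;> rfl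

/-- the interleaving bound -/
lemma nuf_interleave {s : ℕ} (hs : 1 ≤ s) (k kt : ℕ → ℕ)
    (h1 : ∀ i < s, k i < kt i) (h2 : ∀ i, i + 1 < s → kt i < k (i + 1)) (t : ℕ) :
    nuf (fun i : Fin s => k i.1) t ≤ nuf (fun i : Fin s => kt i.1) t ∧
      nuf (fun i : Fin s => kt i.1) t ≤ nuf (fun i : Fin s => k i.1) t + 1 := by
  classical
  constructor
  · refine Finset.card_le_card ?_
    intro i hi
    simp only [Finset.mem_filter, Finset.mem_univ, true_and] at hi ⊢
    exact hi.trans (h1 i.1 i.isLt).le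
  · have L : Fin s := ⟨s - 1, by omega⟩
    have hcard : (Finset.univ.filter fun i : Fin s => t ≤ kt i.1).card ≤
        ((Finset.univ.filter fun i : Fin s => t ≤ kt i.1).erase ⟨s - 1, by omega⟩).card + 1 := by
      rcases Finset.decidableMem (⟨s - 1, by omega⟩ : Fin s)
          (Finset.univ.filter fun i : Fin s => t ≤ kt i.1) with hm | hm
      · rw [Finset.erase_eq_of_notMem hm]; omega
      · rw [Finset.card_erase_of_mem hm]
        have : 1 ≤ (Finset.univ.filter fun i : Fin s => t ≤ kt i.1).card :=
          Finset.card_pos.mpr ⟨_, hm⟩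
        omega
    refine hcard.trans (Nat.add_le_add_right ?_ 1)
    refine Finset.card_le_card_of_injOn (fun i => ⟨min (i.1 + 1) (s - 1), by omega⟩) ?_ ?_
    · intro i hi
      simp only [Finset.mem_coe, Finset.mem_erase, Finset.mem_filter, Finset.mem_univ, true_and] at hi
      have hne : i.1 ≠ s - 1 := fun hv => hi.1 (Fin.ext hv)
      have hlt : i.1 + 1 < s := by have := i.isLt; omega
      have hmin : min (i.1 + 1) (s - 1) = i.1 + 1 := by omega
      simp only [Finset.mem_coe, Finset.mem_filter, Finset.mem_univ, true_and, hmin]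
      exact hi.2.trans (h2 i.1 hlt).le
    · intro i hi j hj hij
      simp only [Finset.coe_erase, Set.mem_diff, Finset.coe_filter, Set.mem_setOf_eq,
        Finset.mem_coe, Finset.mem_filter, Finset.mem_univ, true_and, Set.mem_singleton_iff] at hi hj
      have hnei : i.1 ≠ s - 1 := fun hv => hi.2 (Fin.ext hv)
      have hnej : j.1 ≠ s - 1 := fun hv => hj.2 (Fin.ext hv)
      have := congrArg Fin.val hij
      simp only [] at this
      have hi' := i.isLt
      have hj' := j.isLt
      exact Fin.ext (by omega)


lemma nuf_split (e : ι → ℕ) (a : ℕ) :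
    nuf e a = nuf e (a + 1) + Fintype.card {i : ι // e i = a} := by
  classical
  rw [Fintype.card_subtype, nuf, nuf, ← Finset.card_union_of_disjoint]
  · congr 1
    ext i
    simp only [Finset.mem_filter, Finset.mem_union, Finset.mem_univ, true_and]
    omega
  · rw [Finset.disjoint_filter]
    intro i _ h1 h2
    omega

lemma nuf_restrict (e : ι → ℕ) (t : ℕ) :
    nuf (fun i : {i : ι // e i ≠ 0} => e i.1) (t + 1) = nuf e (t + 1) := by
  classical
  rw [nuf, nuf, ← Fintype.card_subtype, ← Fintype.card_subtype]
  refine Fintype.card_congr ⟨fun x => ⟨x.1.1, x.2⟩,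
    fun x => ⟨⟨x.1, by have := x.2; omega⟩, x.2⟩, fun x => rfl, fun x => rfl⟩

lemma recon (p : ℕ) (e : ι → ℕ) (g : κ → ℕ)
    (h : ∀ t : ℕ, nuf e (t + 1) = nuf g (t + 1)) :
    Nonempty ((∀ i, ZMod (p ^ e i)) ≃+ (∀ j, ZMod (p ^ g j))) := by
  classical
  set ι' := {i : ι // e i ≠ 0}
  set κ' := {j : κ // g j ≠ 0}
  set E : ι' → ℕ := fun i => e i.1 with hE
  set Gf : κ' → ℕ := fun j => g j.1 with hGf
  -- fibers have equal cardinality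
  have fib : ∀ a : ℕ, Fintype.card {i : ι' // E i = a} = Fintype.card {j : κ' // Gf j = a} := by
    intro a
    rcases Nat.eq_zero_or_pos a with rfl | ha
    · rw [Fintype.card_eq_zero_iff.mpr, Fintype.card_eq_zero_iff.mpr]
      · exact ⟨fun x => x.1.2 x.2⟩
      · exact ⟨fun x => x.1.2 x.2⟩
    · obtain ⟨b, rfl⟩ := Nat.exists_eq_succ_of_ne_zero ha.ne'
      simp only [Nat.succ_eq_add_one]
      have h1 := nuf_split E (b + 1)
      have h2 := nuf_split Gf (b + 1)
      have r1 : nuf E (b + 1) = nuf e (b + 1) := nuf_restrict e b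
      have r2 : nuf E (b + 1 + 1) = nuf e (b + 1 + 1) := nuf_restrict e (b + 1)
      have r3 : nuf Gf (b + 1) = nuf g (b + 1) := nuf_restrict g b
      have r4 : nuf Gf (b + 1 + 1) = nuf g (b + 1 + 1) := nuf_restrict g (b + 1)
      have hb := h b
      have hb1 := h (b + 1)
      omega
  -- build value-preserving bijection
  have F : ∀ a : ℕ, {i : ι' // E i = a} ≃ {j : κ' // Gf j = a} :=
    fun a => Classical.choice (Fintype.card_eq.mp (fib a))
  let σ : ι' ≃ κ' :=
    (Equiv.sigmaFiberEquiv E).symm.trans ((Equiv.sigmaCongrRight F).trans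
      (Equiv.sigmaFiberEquiv Gf))
  have hσ : ∀ x : ι', Gf (σ x) = E x := fun x => (F (E x) ⟨x, rfl⟩).2
  -- assemble
  have step1 : (∀ i, ZMod (p ^ e i)) ≃+ (∀ i : ι', ZMod (p ^ E i)) × (∀ i : {i : ι // ¬ e i ≠ 0}, ZMod (p ^ e i.1)) := by
    exact AddEquiv.mk' (Equiv.piEquivPiSubtypeProd (fun i => e i ≠ 0) (fun i => ZMod (p ^ e i)))
      (fun a b => rfl)
  haveI : ∀ i : {i : ι // ¬ e i ≠ 0}, Unique (ZMod (p ^ e i.1)) := by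
    intro i
    have h1 : p ^ e i.1 = 1 := by rw [not_not.mp i.2, pow_zero]
    exact (ZMod.ringEquivCongr h1).toEquiv.unique
  have step2 : (∀ j, ZMod (p ^ g j)) ≃+ (∀ j : κ', ZMod (p ^ Gf j)) × (∀ j : {j : κ // ¬ g j ≠ 0}, ZMod (p ^ g j.1)) := by
    exact AddEquiv.mk' (Equiv.piEquivPiSubtypeProd (fun j => g j ≠ 0) (fun j => ZMod (p ^ g j)))
      (fun a b => rfl)
  haveI : ∀ j : {j : κ // ¬ g j ≠ 0}, Unique (ZMod (p ^ g j.1)) := by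
    intro j
    have h1 : p ^ g j.1 = 1 := by rw [not_not.mp j.2, pow_zero]
    exact (ZMod.ringEquivCongr h1).toEquiv.unique
  have mid : (∀ i : ι', ZMod (p ^ E i)) ≃+ (∀ j : κ', ZMod (p ^ Gf j)) := by
    refine AddEquiv.trans ?_ (RingEquiv.piCongrLeft (fun j : κ' => ZMod (p ^ Gf j)) σ).toAddEquiv
    refine AddEquiv.piCongrRight (fun x => ?_)
    exact (ZMod.ringEquivCongr (congrArg (p ^ ·) (hσ x).symm)).toAddEquiv
  exact ⟨((step1.trans (AddEquiv.prodUnique)).trans mid).trans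
    (step2.trans (AddEquiv.prodUnique)).symm⟩




/-- product over a sum type -/
def sumPiAddEquiv {ι κ : Type*} (M : ι ⊕ κ → Type*) [∀ i, AddCommMonoid (M i)] :
    (∀ i, M i) ≃+ (∀ i, M (Sum.inl i)) × (∀ j, M (Sum.inr j)) :=
  AddEquiv.mk' (Equiv.sumPiEquivProdPi M) (fun a b => rfl)

/-- DFinsupp to Pi -/
def dfinsuppAddEquivPi {ι : Type*} [Fintype ι] (M : ι → Type*) [∀ i, AddCommMonoid (M i)] :
    (Π₀ i, M i) ≃+ ∀ i, M i :=
  AddEquiv.mk' DFinsupp.equivFunOnFintype (fun a b => rfl)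

/-- decomposition of a finite abelian p-group as a product of cyclic p-groups -/
lemma pgroup_decomp (p : ℕ) (hp : p.Prime) (A : Type) [AddCommGroup A] [Finite A]
    (hA : ∀ x : A, ∃ j : ℕ, p ^ j • x = 0) :
    ∃ (ι : Type) (_ : Fintype ι) (e : ι → ℕ), Nonempty (A ≃+ ∀ i, ZMod (p ^ e i)) := by
  classical
  obtain ⟨ι, fι, q, hq, e, ⟨φ⟩⟩ := AddCommGroup.equiv_directSum_zmod_of_finite A
  refine ⟨ι, fι, e, ?_⟩
  have ψ : A ≃+ ∀ i, ZMod (q i ^ e i) := φ.trans (dfinsuppAddEquivPi _)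
  have hP : ∀ x : (∀ i, ZMod (q i ^ e i)), ∃ j : ℕ, p ^ j • x = 0 := by
    intro x
    obtain ⟨j, hj⟩ := hA (ψ.symm x)
    refine ⟨j, ?_⟩
    have := congrArg ψ hj
    rwa [map_nsmul, map_zero, AddEquiv.apply_symm_apply] at this
  have key : ∀ i, q i ^ e i = p ^ e i := by
    intro i
    by_cases he : e i = 0
    · rw [he, pow_zero, pow_zero]
    · have hqi : q i = p := by
        obtain ⟨j, hj⟩ := hP (Pi.single i (1 : ZMod (q i ^ e i)))
        have h1 : p ^ j • (1 : ZMod (q i ^ e i)) = 0 := by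
          have := congrFun hj i
          rwa [Pi.smul_apply, Pi.single_eq_same, Pi.zero_apply] at this
        haveI : NeZero (q i ^ e i) := ⟨pow_ne_zero _ (hq i).pos.ne'⟩
        rw [nsmul_eq_mul, mul_one, ZMod.natCast_eq_zero_iff] at h1
        have h2 : q i ∣ p ^ j := dvd_trans (dvd_pow_self (q i) he) h1
        exact (Nat.prime_dvd_prime_iff_eq (hq i) hp).mp ((hq i).dvd_of_dvd_pow h2)
      rw [hqi]
  exact ⟨ψ.trans (AddEquiv.piCongrRight fun i =>
    (ZMod.ringEquivCongr (key i)).toAddEquiv)⟩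



end Stmt12Aux


/-- Condition (**) for a pair of finite abelian `p`-groups `(G, G̃)`: either `G ≅ G̃`, or
`G ≅ N ⊕ ⊕ᵢ ℤ/p^{kᵢ}` and `G̃ ≅ N ⊕ ⊕ᵢ ℤ/p^{k̃ᵢ}` with strictly interleaving exponents
`k₁ < k̃₁ < k₂ < k̃₂ < ⋯ < k_s < k̃_s` (so that the maximum lies on the `G̃` side, i.e.
`max (I(G̃)∖I(G)) ∪ {0} > max (I(G)∖I(G̃)) ∪ {0}`). -/
def DoubleStarPair (p : ℕ) (G Gt : Type*) [AddCommGroup G] [AddCommGroup Gt] : Prop :=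
  Nonempty (G ≃+ Gt) ∨
    ∃ (m : ℕ) (nn : ℕ → ℕ) (s : ℕ) (k kt : ℕ → ℕ), 1 ≤ s ∧
      Nonempty (G ≃+ ((∀ i : Fin m, ZMod (p ^ nn i.1)) × (∀ i : Fin s, ZMod (p ^ k i.1)))) ∧
      Nonempty (Gt ≃+ ((∀ i : Fin m, ZMod (p ^ nn i.1)) × (∀ i : Fin s, ZMod (p ^ kt i.1)))) ∧
      (∀ i < s, k i < kt i) ∧ ∀ i, i + 1 < s → kt i < k (i + 1)


namespace Stmt12Aux


lemma decomp_pair {p : ℕ} (hp : p.Prime) (G Gt : Type) [AddCommGroup G] [AddCommGroup Gt]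
    [Finite G] (hG : ∀ x : G, ∃ j : ℕ, p ^ j • x = 0) (hstar : DoubleStarPair p G Gt) :
    ∃ (ι : Type) (_ : Fintype ι) (e et : ι → ℕ),
      Nonempty (G ≃+ ∀ i, ZMod (p ^ e i)) ∧ Nonempty (Gt ≃+ ∀ i, ZMod (p ^ et i)) ∧
      ∀ t, nuf e t ≤ nuf et t ∧ nuf et t ≤ nuf e t + 1 := by
  rcases hstar with hGG | ⟨m, nn, s, k, kt, hs, ⟨φ⟩, ⟨φt⟩, hk1, hk2⟩
  · obtain ⟨χ⟩ := hGG
    obtain ⟨ι', fι, e, ⟨ψ⟩⟩ := pgroup_decomp p hp G hG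
    exact ⟨ι', fι, e, e, ⟨ψ⟩, ⟨χ.symm.trans ψ⟩, fun t => ⟨le_rfl, Nat.le_succ _⟩⟩
  · refine ⟨Fin m ⊕ Fin s, inferInstance,
      Sum.elim (fun i => nn i.1) (fun i => k i.1),
      Sum.elim (fun i => nn i.1) (fun i => kt i.1),
      ⟨φ.trans (sumPiAddEquiv
        (fun x => ZMod (p ^ Sum.elim (fun i : Fin m => nn i.1) (fun i : Fin s => k i.1) x))).symm⟩,
      ⟨φt.trans (sumPiAddEquiv
        (fun x => ZMod (p ^ Sum.elim (fun i : Fin m => nn i.1) (fun i : Fin s => kt i.1) x))).symm⟩,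
      fun t => ?_⟩
    rw [nuf_sum, nuf_sum]
    simp only [Sum.elim_inl, Sum.elim_inr]
    have h := nuf_interleave hs k kt hk1 hk2 t
    omega

theorem stmt12pre {p : ℕ} (hp : p.Prime)
    (G Gt H Ht : Type) [AddCommGroup G] [AddCommGroup Gt] [AddCommGroup H] [AddCommGroup Ht]
    [Finite G] [Finite Gt] [Finite H] [Finite Ht]
    (hG : ∀ x : G, ∃ j : ℕ, p ^ j • x = 0) (hGt : ∀ x : Gt, ∃ j : ℕ, p ^ j • x = 0)
    (hH : ∀ x : H, ∃ j : ℕ, p ^ j • x = 0) (hHt : ∀ x : Ht, ∃ j : ℕ, p ^ j • x = 0)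
    (f F : ℕ) (hfF : Even ((f : ℤ) - (F : ℤ)))
    (hstarG : DoubleStarPair p G Gt) (hstarH : DoubleStarPair p H Ht) :
    Nonempty
      (((Fin f → G) × (Fin (F + 1) → Gt) × (Fin 2 → TensorProduct ℤ G Gt)) ≃+
        ((Fin f → H) × (Fin (F + 1) → Ht) × (Fin 2 → TensorProduct ℤ H Ht))) ↔
      (Nonempty (G ≃+ H) ∧ Nonempty (Gt ≃+ Ht)) := by
  constructor
  · rintro ⟨Φ⟩
    obtain ⟨ι, fι, e, et, ⟨ψG⟩, ⟨ψGt⟩, hbG⟩ := decomp_pair hp G Gt hG hstarG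
    obtain ⟨κ', fκ, b, bt, ⟨ψH⟩, ⟨ψHt⟩, hbH⟩ := decomp_pair hp H Ht hH hstarH
    obtain ⟨τG⟩ := tensor_pi_zmod p hp.pos e et
    obtain ⟨τH⟩ := tensor_pi_zmod p hp.pos b bt
    have ψT : TensorProduct ℤ G Gt ≃+ ∀ j, ∀ i, ZMod (p ^ min (et j) (e i)) :=
      (TensorProduct.congr ψG.toIntLinearEquiv ψGt.toIntLinearEquiv).toAddEquiv.trans τG
    have ψTH : TensorProduct ℤ H Ht ≃+ ∀ j, ∀ i, ZMod (p ^ min (bt j) (b i)) :=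
      (TensorProduct.congr ψH.toIntLinearEquiv ψHt.toIntLinearEquiv).toAddEquiv.trans τH
    -- count equality, exponent form
    have expEq : ∀ t : ℕ,
        muf e t * f + (muf et t * (F + 1) + mutf et e t * 2)
          = muf b t * f + (muf bt t * (F + 1) + mutf bt b t * 2) := by
      intro t
      have hcount := tc_congr (p ^ t) Φ
      rw [tc_prod, tc_prod, tc_prod, tc_prod, tc_const_pi, tc_const_pi, tc_const_pi,
        tc_const_pi, tc_const_pi, tc_const_pi] at hcount
      rw [tc_congr (p ^ t) ψG, tc_congr (p ^ t) ψGt, tc_congr (p ^ t) ψT,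
        tc_congr (p ^ t) ψH, tc_congr (p ^ t) ψHt, tc_congr (p ^ t) ψTH] at hcount
      rw [tc_pi_zmod hp, tc_pi_zmod hp, tc_pi_zmod hp, tc_pi_zmod hp,
        tc_pi_pi_zmod hp, tc_pi_pi_zmod hp] at hcount
      rw [Fintype.card_fin, Fintype.card_fin, Fintype.card_fin] at hcount
      rw [← pow_mul, ← pow_mul, ← pow_mul, ← pow_mul, ← pow_mul, ← pow_mul,
        ← pow_add, ← pow_add, ← pow_add, ← pow_add] at hcount
      exact Nat.pow_right_injective hp.two_le hcount
    -- increments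
    have incr : ∀ t : ℕ,
        f * nuf e (t + 1) + (F + 1) * nuf et (t + 1)
            + 2 * (nuf et (t + 1) * nuf e (t + 1))
          = f * nuf b (t + 1) + (F + 1) * nuf bt (t + 1)
            + 2 * (nuf bt (t + 1) * nuf b (t + 1)) := by
      intro t
      have h1 := expEq t
      have h2 := expEq (t + 1)
      rw [muf_succ, muf_succ, muf_succ, muf_succ, mutf_succ, mutf_succ] at h2
      nlinarith [h1, h2]
    -- apply key_arith
    have nuEq : ∀ t : ℕ, nuf e (t + 1) = nuf b (t + 1) ∧ nuf et (t + 1) = nuf bt (t + 1) := by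
      intro t
      have hbG' := hbG (t + 1)
      have hbH' := hbH (t + 1)
      have hG1 : nuf et (t + 1) = nuf e (t + 1) + (nuf et (t + 1) - nuf e (t + 1)) := by omega
      have hH1 : nuf bt (t + 1) = nuf b (t + 1) + (nuf bt (t + 1) - nuf b (t + 1)) := by omega
      have h := incr t
      rw [hG1, hH1] at h
      have := key_arith f F (nuf e (t + 1)) (nuf b (t + 1))
        (nuf et (t + 1) - nuf e (t + 1)) (nuf bt (t + 1) - nuf b (t + 1))
        (by omega) (by omega) (by linarith [h])
      omega
    obtain ⟨rG⟩ := recon p e b (fun t => (nuEq t).1)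
    obtain ⟨rGt⟩ := recon p et bt (fun t => (nuEq t).2)
    exact ⟨⟨(ψG.trans rG).trans ψH.symm⟩, ⟨(ψGt.trans rGt).trans ψHt.symm⟩⟩
  · rintro ⟨⟨α⟩, ⟨β⟩⟩
    refine ⟨AddEquiv.prodCongr (AddEquiv.piCongrRight fun _ => α)
      (AddEquiv.prodCongr (AddEquiv.piCongrRight fun _ => β)
        (AddEquiv.piCongrRight fun _ =>
          (TensorProduct.congr α.toIntLinearEquiv β.toIntLinearEquiv).toAddEquiv))⟩


end Stmt12Aux


/-- If `(G, G̃)` and `(H, H̃)` are pairs of finite abelian `p`-groups satisfying (**),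
`f ≥ 0`, `F ≥ 0` with `f − F` even, then
`G^f ⊕ G̃^{F+1} ⊕ (G ⊗ G̃)² ≅ H^f ⊕ H̃^{F+1} ⊕ (H ⊗ H̃)²` iff `(G, G̃) = (H, H̃)`. -/
theorem stmt12 {p : ℕ} (hp : p.Prime)
    (G Gt H Ht : Type) [AddCommGroup G] [AddCommGroup Gt] [AddCommGroup H] [AddCommGroup Ht]
    [Finite G] [Finite Gt] [Finite H] [Finite Ht]
    (hG : ∀ x : G, ∃ j : ℕ, p ^ j • x = 0) (hGt : ∀ x : Gt, ∃ j : ℕ, p ^ j • x = 0)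
    (hH : ∀ x : H, ∃ j : ℕ, p ^ j • x = 0) (hHt : ∀ x : Ht, ∃ j : ℕ, p ^ j • x = 0)
    (f F : ℕ) (hfF : Even ((f : ℤ) - (F : ℤ)))
    (hstarG : DoubleStarPair p G Gt) (hstarH : DoubleStarPair p H Ht) :
    Nonempty
      (((Fin f → G) × (Fin (F + 1) → Gt) × (Fin 2 → TensorProduct ℤ G Gt)) ≃+
        ((Fin f → H) × (Fin (F + 1) → Ht) × (Fin 2 → TensorProduct ℤ H Ht))) ↔
      (Nonempty (G ≃+ H) ∧ Nonempty (Gt ≃+ Ht)) := by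
  exact Stmt12Aux.stmt12pre hp G Gt H Ht hG hGt hH hHt f F hfF hstarG hstarH
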